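/- Given J ⊆ ℤ/fℤ, define J′ = {i ∉ J₀ : i ∈ J} ∪ {i ∈ J₀ : ν(i) ∈ J}, and set s′ = s(b′,J′), s = s(b,J), t′ = t(b′,J′), t = t(b,J). Then for every i ∈ ℤ/fℤ: A_i(s′, s) = p^f − 1 if (i ∈ M̃ and i ∈ J′) or (i ∈ J₀ and i ∈ J′ and i+1 ∈ J₀), and A_i(s′, s) = 0 otherwise; and A_i(t′, t) = p^f − 1 if (i ∈ M̃ and i ∉ J′) or (i ∈ J₀ and i ∉ J′ and i+1 ∈ J₀), and A_i(t′, t) = 0 otherwise. -/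

import Mathlib

open scoped Classical
noncomputable section

/-- `Σ(v) = Σ_{i=0}^{f−1} v_i · p^{f−1−i}`. -/
def Sig (p f : ℕ) (v : ZMod f → ℤ) : ℤ :=
  ∑ i ∈ Finset.range f, v (i : ZMod f) * (p : ℤ) ^ (f - 1 - i)

/-- `A_i(c,d) = Σ_{j=1}^{f} p^{f−j} · (c_{i+j} − d_{i+j})`. -/
def Ai (p f : ℕ) (c d : ZMod f → ℤ) (i : ZMod f) : ℤ :=
  ∑ j ∈ Finset.Icc 1 f, (p : ℤ) ^ (f - j) * (c (i + (j : ZMod f)) - d (i + (j : ZMod f)))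

/-- `T_ν`: the maximal run of indices with `k`-value 1 following `ν`. -/
def Trun (f : ℕ) (k : ZMod f → ℤ) (ν : ZMod f) : Set (ZMod f) :=
  {i | ∃ s : ℕ, 1 ≤ s ∧ i = ν + (s : ZMod f) ∧
        ∀ j : ℕ, 1 ≤ j → j ≤ s → k (ν + (j : ZMod f)) = 1}

/-- `b_{i,1} = k_i − 1`. -/
def b1 (f : ℕ) (k : ZMod f → ℤ) : ZMod f → ℤ := fun i => k i - 1

/-- the constantly zero second component. -/
def zero2 (f : ℕ) : ZMod f → ℤ := fun _ => 0

/-- `b′_{i,1}`. -/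
def bp1 (p f : ℕ) (k : ZMod f → ℤ) : ZMod f → ℤ := fun i =>
  if k i = 1 then (if k (i + 1) = 1 then (p : ℤ) - 1 else (p : ℤ))
  else (if k (i + 1) = 1 then k i - 2 else k i - 1)

/-- `b^μ_{i,1}`. -/
def bmu1 (p f : ℕ) (k : ZMod f → ℤ) (μ : ZMod f) : ZMod f → ℤ := fun i =>
  if i = μ then k μ - 1 else bp1 p f k i

/-- `b^μ_{i,2}`. -/
def bmu2 (f : ℕ) (μ : ZMod f) : ZMod f → ℤ := fun i => if i = μ then -1 else 0

/-- `b^Θ_{i,1}`. -/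
def bth1 (p f : ℕ) (k : ZMod f → ℤ) : ZMod f → ℤ := fun i =>
  if k i = 1 then (if k (i + 1) = 1 then (p : ℤ) - 1 else (p : ℤ)) else k i - 1

/-- `b^Θ_{i,2}`. -/
def bth2 (f : ℕ) (k : ZMod f → ℤ) : ZMod f → ℤ := fun i =>
  if k i ≠ 1 ∧ k (i + 1) = 1 then -1 else 0

/-- `s_i(c,S) = c_{i,1}` if `i ∈ S`, else `c_{i,2}`. -/
def sW (f : ℕ) (c1 c2 : ZMod f → ℤ) (S : Set (ZMod f)) : ZMod f → ℤ :=
  fun i => if i ∈ S then c1 i else c2 i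

/-- `t_i(c,S) = c_{i,2}` if `i ∈ S`, else `c_{i,1}`. -/
def tW (f : ℕ) (c1 c2 : ZMod f → ℤ) (S : Set (ZMod f)) : ZMod f → ℤ :=
  fun i => if i ∈ S then c2 i else c1 i

/-- The set `𝒫′` of Definition 3.7 of the paper. -/
def memP' (p f : ℕ) (r : ZMod f → ℤ) : Prop :=
  (∀ i, r i = 0 ∨ r i = 1 ∨ r i = (p : ℤ) - 1 ∨ r i = (p : ℤ)) ∧
  (∀ i, r i = (p : ℤ) → (r (i + 1) = 0 ∨ r (i + 1) = 1)) ∧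
  (∀ i, (r i = 1 ∨ r i = (p : ℤ) - 1) → (r (i + 1) = (p : ℤ) - 1 ∨ r (i + 1) = (p : ℤ))) ∧
  (∀ i, r i = 0 →
    ((∀ j, r j = 0) ∨
      ∃ s t : ℕ, 1 ≤ s ∧ 1 ≤ t ∧
        (∀ j : ℕ, 1 ≤ j → j ≤ s - 1 → r (i + (j : ZMod f)) = 0) ∧
        r (i + (s : ZMod f)) = 1 ∧
        (∀ j : ℕ, 1 ≤ j → j ≤ t - 1 → r (i - (j : ZMod f)) = 0) ∧
        r (i - (t : ZMod f)) = (p : ℤ)))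

/-- The exceptional case of Theorem 3.9 of the paper. -/
def Exceptional (p f : ℕ) (r : ZMod f → ℤ) (J : Set (ZMod f)) : Prop :=
  memP' p f r ∧ (∀ i, (r i = (p : ℤ) - 1 ∨ r i = (p : ℤ)) → i ∈ J) ∧
    (∀ i, r i = 1 → i ∉ J)


/-- Uniqueness of the starting point of a run. -/
lemma trun_unique {f : ℕ} {k : ZMod f → ℤ} {ν ν' i : ZMod f}
    (h : k ν ≠ 1) (h' : k ν' ≠ 1)
    (hi : i ∈ Trun f k ν) (hi' : i ∈ Trun f k ν') : ν = ν' := by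
  obtain ⟨s, hs, hieq, hall⟩ := hi
  obtain ⟨s', hs', hieq', hall'⟩ := hi'
  have key : ν + (s : ZMod f) = ν' + (s' : ZMod f) := by rw [← hieq, ← hieq']
  rcases lt_trichotomy s s' with hlt | heq | hgt
  · exfalso
    apply h
    have h2 : ν = ν' + ((s' - s : ℕ) : ZMod f) := by
      have hc : (((s' - s : ℕ)) : ZMod f) = (s' : ZMod f) - (s : ZMod f) := by
        push_cast [Nat.cast_sub hlt.le]; ring
      rw [hc]
      linear_combination key
    rw [h2]
    exact hall' (s' - s) (by omega) (by omega)
  · subst heq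
    exact add_right_cancel key
  · exfalso
    apply h'
    have h2 : ν' = ν + ((s - s' : ℕ) : ZMod f) := by
      have hc : (((s - s' : ℕ)) : ZMod f) = (s : ZMod f) - (s' : ZMod f) := by
        push_cast [Nat.cast_sub hgt.le]; ring
      rw [hc]
      linear_combination key.symm
    rw [h2]
    exact hall (s - s') (by omega) (by omega)

/-- If `k m = 1` then membership of `m` in `J'` agrees with that of `m - 1`. -/
lemma mem_J'_prev {f : ℕ} {k : ZMod f → ℤ} {nu : ZMod f → ZMod f}
    (hnu : ∀ i, k i = 1 → ((k (nu i) ≠ 1 ∧ k (nu i + 1) = 1) ∧ i ∈ Trun f k (nu i)))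
    {J J' : Set (ZMod f)}
    (hJ' : ∀ i, i ∈ J' ↔ ((k i ≠ 1 ∧ i ∈ J) ∨ (k i = 1 ∧ nu i ∈ J)))
    {m : ZMod f} (hm : k m = 1) : (m ∈ J' ↔ (m - 1) ∈ J') := by
  obtain ⟨⟨hν1, hν2⟩, ⟨s, hs, heq, hall⟩⟩ := hnu m hm
  set ν := nu m with hνdef
  rcases Nat.lt_or_ge s 2 with hs2 | hs2
  · have hs1 : s = 1 := by omega
    subst hs1
    have hprev : m - 1 = ν := by rw [heq]; push_cast; ring
    have h1 : m ∈ J' ↔ ν ∈ J := by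
      rw [hJ' m]; simp [hm]; exact Iff.rfl
    have h2 : (m - 1) ∈ J' ↔ ν ∈ J := by
      rw [hJ' (m-1), hprev]; simp [hν1]
    rw [h1, h2]
  · have hprev : m - 1 = ν + ((s - 1 : ℕ) : ZMod f) := by
      rw [heq]
      have : (((s - 1 : ℕ)) : ZMod f) = (s : ZMod f) - 1 := by
        push_cast [Nat.cast_sub (by omega : 1 ≤ s)]; ring
      rw [this]; ring
    have hm1 : k (m - 1) = 1 := by
      rw [hprev]; exact hall (s-1) (by omega) (by omega)
    have htr : (m - 1) ∈ Trun f k ν :=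
      ⟨s - 1, by omega, hprev, fun j h1 h2 => hall j h1 (by omega)⟩
    obtain ⟨⟨h1', h2'⟩, htr'⟩ := hnu (m-1) hm1
    have hνeq : nu (m - 1) = ν := trun_unique h1' hν1 htr' htr
    rw [hJ' m, hJ' (m-1), hνeq]
    simp [hm, hm1]; exact Iff.rfl

/-- Indicator used in the telescoping argument. -/
def ee (f : ℕ) (k : ZMod f → ℤ) (J' : Set (ZMod f)) : ZMod f → ℤ :=
  fun m => if m ∈ J' ∧ k (m + 1) = 1 then 1 else 0

/-- Indicator used in the telescoping argument, complementary version. -/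
def et (f : ℕ) (k : ZMod f → ℤ) (J' : Set (ZMod f)) : ZMod f → ℤ :=
  fun m => if m ∉ J' ∧ k (m + 1) = 1 then 1 else 0

/-- Telescoping evaluation of `A_i`. -/
lemma Ai_telescope (p f : ℕ) (c d e : ZMod f → ℤ)
    (h : ∀ m : ZMod f, c m - d m = (p : ℤ) * e (m - 1) - e m) (i : ZMod f) :
    Ai p f c d i = ((p : ℤ) ^ f - 1) * e i := by
  have key : ∀ j ∈ Finset.Icc 1 f,
      (p : ℤ) ^ (f - j) * (c (i + (j : ZMod f)) - d (i + (j : ZMod f)))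
        = (p : ℤ) ^ (f - (j-1)) * e (i + ((j-1 : ℕ) : ZMod f))
          - (p : ℤ) ^ (f - j) * e (i + (j : ZMod f)) := by
    intro j hj
    simp only [Finset.mem_Icc] at hj
    rw [h (i + (j : ZMod f))]
    have h1 : i + (j : ZMod f) - 1 = i + ((j - 1 : ℕ) : ZMod f) := by
      have : (((j - 1 : ℕ)) : ZMod f) = (j : ZMod f) - 1 := by
        push_cast [Nat.cast_sub (by omega : 1 ≤ j)]; ring
      rw [this]; ring
    have h2 : (p : ℤ) ^ (f - j) * (p : ℤ) = (p : ℤ) ^ (f - (j - 1)) := by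
      rw [← pow_succ]
      congr 1
      omega
    rw [h1]
    rw [← h2]; ring
  rw [Ai, Finset.sum_congr rfl key]
  have hicc : Finset.Icc 1 f = Finset.image (· + 1) (Finset.range f) := by
    ext x
    simp only [Finset.mem_Icc, Finset.mem_image, Finset.mem_range]
    constructor
    · rintro ⟨h1, h2⟩; exact ⟨x - 1, by omega, by omega⟩
    · rintro ⟨a, ha, rfl⟩; omega
  rw [hicc, Finset.sum_image (by intro a _ b _ h; simp only at h; omega)]
  have := Finset.sum_range_sub' (fun j => (p : ℤ) ^ (f - j) * e (i + (j : ZMod f))) f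
  simp only [Nat.add_sub_cancel] at *
  rw [this]
  have : i + ((f : ℕ) : ZMod f) = i := by
    rw [ZMod.natCast_self]; ring
  rw [this]
  simp
  ring

/-- The pointwise difference identity, `s`-side. -/
lemma delta_s {p f : ℕ} {k : ZMod f → ℤ} {nu : ZMod f → ZMod f}
    (hnu : ∀ i, k i = 1 → ((k (nu i) ≠ 1 ∧ k (nu i + 1) = 1) ∧ i ∈ Trun f k (nu i)))
    {J J' : Set (ZMod f)}
    (hJ' : ∀ i, i ∈ J' ↔ ((k i ≠ 1 ∧ i ∈ J) ∨ (k i = 1 ∧ nu i ∈ J))) :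
    ∀ m : ZMod f, sW f (bp1 p f k) (zero2 f) J' m - sW f (b1 f k) (zero2 f) J m
      = (p : ℤ) * ee f k J' (m - 1) - ee f k J' m := by
  intro m
  have hsucc : m - 1 + 1 = m := by ring
  by_cases hkm : k m = 1
  · have hpv : m ∈ J' ↔ m - 1 ∈ J' := mem_J'_prev hnu hJ' hkm
    simp only [sW, bp1, b1, zero2, ee, hsucc, hkm]
    split_ifs <;> first | omega | tauto
  · have hJm : m ∈ J' ↔ m ∈ J := by rw [hJ' m]; tauto
    simp only [sW, bp1, b1, zero2, ee, hsucc]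
    split_ifs <;> first | omega | tauto

/-- The pointwise difference identity, `t`-side. -/
lemma delta_t {p f : ℕ} {k : ZMod f → ℤ} {nu : ZMod f → ZMod f}
    (hnu : ∀ i, k i = 1 → ((k (nu i) ≠ 1 ∧ k (nu i + 1) = 1) ∧ i ∈ Trun f k (nu i)))
    {J J' : Set (ZMod f)}
    (hJ' : ∀ i, i ∈ J' ↔ ((k i ≠ 1 ∧ i ∈ J) ∨ (k i = 1 ∧ nu i ∈ J))) :
    ∀ m : ZMod f, tW f (bp1 p f k) (zero2 f) J' m - tW f (b1 f k) (zero2 f) J m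
      = (p : ℤ) * et f k J' (m - 1) - et f k J' m := by
  intro m
  have hsucc : m - 1 + 1 = m := by ring
  by_cases hkm : k m = 1
  · have hpv : m ∈ J' ↔ m - 1 ∈ J' := mem_J'_prev hnu hJ' hkm
    simp only [tW, bp1, b1, zero2, et, hsucc, hkm]
    split_ifs <;> first | omega | tauto
  · have hJm : m ∈ J' ↔ m ∈ J := by rw [hJ' m]; tauto
    simp only [tW, bp1, b1, zero2, et, hsucc]
    split_ifs <;> first | omega | tauto

/-- First part of Lemma A.4 of the paper: the values of `A_i(s′, s)` and `A_i(t′, t)` for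
the subset `J′` derived from `J` via `ν(·)`. -/
theorem stmt13 (p f : ℕ) (hp : p.Prime) (hodd : Odd p) (hf : 1 ≤ f)
    (k : ZMod f → ℤ)
    (hk : ∀ i, 1 ≤ k i ∧ k i ≤ (p : ℤ))
    (hone : ∃ i, k i = 1) (hnotone : ∃ i, k i ≠ 1)
    (h21 : ∀ i, ¬(k i = 2 ∧ k (i + 1) = 1))
    (nu : ZMod f → ZMod f)
    (hnu : ∀ i, k i = 1 → ((k (nu i) ≠ 1 ∧ k (nu i + 1) = 1) ∧ i ∈ Trun f k (nu i)))
    (J J' : Set (ZMod f))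
    (hJ' : ∀ i, i ∈ J' ↔ ((k i ≠ 1 ∧ i ∈ J) ∨ (k i = 1 ∧ nu i ∈ J))) :
    ∀ i : ZMod f,
      Ai p f (sW f (bp1 p f k) (zero2 f) J') (sW f (b1 f k) (zero2 f) J) i
        = (if ((k i ≠ 1 ∧ k (i + 1) = 1) ∧ i ∈ J') ∨ (k i = 1 ∧ i ∈ J' ∧ k (i + 1) = 1)
            then (p : ℤ) ^ f - 1 else 0) ∧
      Ai p f (tW f (bp1 p f k) (zero2 f) J') (tW f (b1 f k) (zero2 f) J) i
        = (if ((k i ≠ 1 ∧ k (i + 1) = 1) ∧ i ∉ J') ∨ (k i = 1 ∧ i ∉ J' ∧ k (i + 1) = 1)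
            then (p : ℤ) ^ f - 1 else 0) := by
  intro i
  have hc1 : (((k i ≠ 1 ∧ k (i + 1) = 1) ∧ i ∈ J') ∨ (k i = 1 ∧ i ∈ J' ∧ k (i + 1) = 1))
      ↔ (i ∈ J' ∧ k (i + 1) = 1) := by
    by_cases h : k i = 1 <;> simp [h] <;> tauto
  have hc2 : (((k i ≠ 1 ∧ k (i + 1) = 1) ∧ i ∉ J') ∨ (k i = 1 ∧ i ∉ J' ∧ k (i + 1) = 1))
      ↔ (i ∉ J' ∧ k (i + 1) = 1) := by
    by_cases h : k i = 1 <;> simp [h] <;> tauto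
  constructor
  · rw [Ai_telescope p f _ _ (ee f k J') (delta_s hnu hJ') i]
    simp only [ee, hc1]
    split_ifs <;> ring
  · rw [Ai_telescope p f _ _ (et f k J') (delta_t hnu hJ') i]
    simp only [et, hc2]
    split_ifs <;> ring
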